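/- For the Pareto distribution with cdf F₀(x) = 1 - x^{-β}, x > 1, β > 0, and any γ < 0, k > 0, M ≠ 0: for all sufficiently large n and all y with -|M| ln n < y < -|M|(ln n)^{α₀} (for fixed α₀ ∈ (0,1/2)), F₀(F₀^{-1}(1 - k/n) + y) ≥ 1 - (k/n)·exp(γ y). -/

import Mathlib

open Filter

/-- Pareto cdf `F₀(x) = 1 - x^{-β}` for `x > 1`. -/
noncomputable def paretoCDF (β x : ℝ) : ℝ := if 1 < x then 1 - x ^ (-β) else 0

set_option maxHeartbeats 1000000

/-- Lower bound on the Pareto cdf below the high quantile: for all sufficiently large `n`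
and all `y` with `-|M| ln n < y < -|M| (ln n)^{α₀}`,
`F₀(F₀^{-1}(1 - k/n) + y) ≥ 1 - (k/n) exp(γ y)`. -/
theorem pareto_quantile_lower_bound (β k γ M α₀ : ℝ) (hβ : 0 < β) (hk : 0 < k)
    (hγ : γ < 0) (hM : M ≠ 0) (hα₀ : α₀ ∈ Set.Ioo (0 : ℝ) (1 / 2)) :
    ∀ᶠ n : ℕ in atTop, ∀ y : ℝ,
      -|M| * Real.log n < y → y < -|M| * (Real.log n) ^ α₀ →
      1 - (k / (n : ℝ)) * Real.exp (γ * y) ≤ paretoCDF β (((n : ℝ) / k) ^ (1 / β) + y) := by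
  have hM' : 0 < |M| := abs_pos.mpr hM
  have hβ' : (0:ℝ) < 1 / β := by positivity
  have hk' : (0:ℝ) < k ^ (1/β) := Real.rpow_pos_of_pos hk _
  have hq_tendsto : Tendsto (fun x : ℝ => (x / k) ^ (1/β)) atTop atTop :=
    (tendsto_rpow_atTop hβ').comp (tendsto_id.atTop_div_const hk)
  have hlog : (fun x : ℝ => Real.log x) =o[atTop] fun x : ℝ => x ^ (1/β) :=
    isLittleO_log_rpow_atTop hβ'
  set c : ℝ := 1 / (4 * |M| * k ^ (1/β)) with hc
  have hc0 : 0 < c := by positivity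
  have hE : ∀ᶠ x : ℝ in atTop,
      2 ≤ x ∧ ‖Real.log x‖ ≤ c * ‖x ^ (1/β)‖ ∧ 4 ≤ (x / k) ^ (1/β) ∧
        2 * β / (-γ) ≤ (x / k) ^ (1/β) := by
    filter_upwards [eventually_ge_atTop (2:ℝ), hlog.bound hc0,
      hq_tendsto.eventually_ge_atTop 4, hq_tendsto.eventually_ge_atTop (2 * β / (-γ))] with
      x h1 h2 h3 h4
    exact ⟨h1, h2, h3, h4⟩
  filter_upwards [tendsto_natCast_atTop_atTop.eventually hE] with n hn
  obtain ⟨h2n, hbound, hq4, hqγ⟩ := hn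
  intro y hy1 hy2
  set x : ℝ := (n : ℝ) with hx
  clear_value x
  have hx0 : 0 < x := lt_of_lt_of_le two_pos h2n
  set q : ℝ := (x / k) ^ (1/β) with hqdef
  have hq0 : 0 < q := hqdef ▸ Real.rpow_pos_of_pos (by positivity) _
  clear_value q
  have hlogx : 0 < Real.log x := Real.log_pos (by linarith)
  -- from the little-o bound: |M| * log x ≤ q / 4
  have hxq : x ^ (1/β) = q * k ^ (1/β) := by
    rw [hqdef, Real.div_rpow (le_of_lt hx0) (le_of_lt hk)]
    field_simp
  have hlogq : |M| * Real.log x ≤ q / 4 := by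
    rw [Real.norm_eq_abs, Real.norm_eq_abs, abs_of_nonneg hlogx.le,
      abs_of_nonneg (Real.rpow_nonneg hx0.le _), hxq, hc] at hbound
    have h4M : (0:ℝ) < 4 * |M| * k ^ (1/β) := by positivity
    rw [div_mul_eq_mul_div, le_div_iff₀ h4M] at hbound
    nlinarith
  -- y bounds
  have hy0 : y < 0 := by
    have : 0 < (Real.log x) ^ α₀ := Real.rpow_pos_of_pos hlogx _
    nlinarith [hy2]
  have hyq : -q / 4 < y := by nlinarith [hy1]
  have hq1 : 1 < q + y := by nlinarith
  -- unfold the cdf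
  rw [paretoCDF, if_pos hq1]
  have hkn : k / x = q ^ (-β) := by
    rw [hqdef, ← Real.rpow_mul (by positivity : (0:ℝ) ≤ x / k)]
    have he : 1 / β * (-β) = -1 := by field_simp
    rw [he, Real.rpow_neg_one, inv_div]
  rw [hkn]
  have key : (q + y) ^ (-β) ≤ q ^ (-β) * Real.exp (γ * y) := by
    have hq1' : (0:ℝ) < q + y := by linarith
    rw [Real.rpow_def_of_pos hq1', Real.rpow_def_of_pos hq0, ← Real.exp_add]
    apply Real.exp_le_exp.mpr
    -- reduce to: -β * log (1 + y/q) ≤ γ * y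
    have hlogdiv : Real.log (q + y) = Real.log q + Real.log (1 + y / q) := by
      have : q + y = q * (1 + y / q) := by field_simp
      rw [this, Real.log_mul hq0.ne' (by nlinarith : (1:ℝ) + y / q ≠ 0)]
    rw [hlogdiv]
    set t : ℝ := y / q with ht
    clear_value t
    have ht1 : -1/4 < t := by
      rw [ht, lt_div_iff₀ hq0]; nlinarith
    have ht0 : t < 0 := by rw [ht]; exact div_neg_of_neg_of_pos hy0 hq0
    have h1t : (0:ℝ) < 1 + t := by linarith
    -- log (1 + t) ≥ t / (1 + t) ≥ 2 t
    have hlog1 : -Real.log (1 + t) ≤ -(t / (1 + t)) := by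
      have := Real.log_le_sub_one_of_pos (show (0:ℝ) < (1 + t)⁻¹ by positivity)
      rw [Real.log_inv] at this
      have : -Real.log (1 + t) ≤ (1 + t)⁻¹ - 1 := this
      have he : (1 + t)⁻¹ - 1 = -(t / (1 + t)) := by field_simp; ring
      linarith [he ▸ this]
    have hlog2 : -(t / (1 + t)) ≤ -(2 * t) := by
      rw [neg_le_neg_iff, le_div_iff₀ h1t]
      nlinarith
    -- 2β/q ≤ -γ
    have hfrac : 2 * β ≤ -γ * q := by
      rw [div_le_iff₀ (by linarith : (0:ℝ) < -γ)] at hqγ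
      linarith
    have hyt : y = t * q := by rw [ht]; field_simp
    have hβt : -β * Real.log (1 + t) ≤ -β * (2 * t) :=
      mul_le_mul_of_nonpos_left (by linarith : 2 * t ≤ Real.log (1 + t))
        (by linarith : -β ≤ 0)
    have h2 : -β * (2 * t) ≤ γ * y := by
      have hmul := mul_le_mul_of_nonneg_left hfrac (by linarith : (0:ℝ) ≤ -t)
      rw [hyt]; nlinarith [hmul]
    rw [add_mul]
    linarith [hβt, h2]
  linarith [key]
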